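/- Half-sibling regression recovery: Let (Ω, 𝓕, P) be a probability space, let Q and N be random variables with Q independent of N, let X := g(N) and Y := Q + f(N) for measurable functions g and f, with Q and f(N) integrable. If f(N) is recoverable from X in the sense that E[f(N) ∣ X] = f(N) almost surely (e.g., if f(N) is measurable with respect to the σ-algebra generated by X), then Y − E[Y ∣ X] = Q − E[Q] almost surely; i.e., subtracting the regression of Y on X recovers the signal Q up to its constant mean. -/

import Mathlib

open MeasureTheory ProbabilityTheory

/-- Half-sibling regression recovery: if `Q ⫫ N`, `X := g(N)`, `Y := Q + f(N)`, and
`E[f(N) ∣ X] = f(N)` a.s., then `Y − E[Y ∣ X] = Q − E[Q]` a.s.: subtracting the regression of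
`Y` on `X` recovers the signal `Q` up to its constant mean. -/
theorem half_sibling_regression
    {Ω : Type*} [MeasurableSpace Ω] (μ : Measure Ω) [IsProbabilityMeasure μ]
    {β γ : Type*} [MeasurableSpace β] [MeasurableSpace γ]
    (Q : Ω → ℝ) (N : Ω → β) (hQ : Measurable Q) (hN : Measurable N)
    (hindep : IndepFun Q N μ)
    (g : β → γ) (f : β → ℝ) (hg : Measurable g) (hf : Measurable f)
    (X : Ω → γ) (Y : Ω → ℝ)
    (hX : ∀ ω, X ω = g (N ω)) (hY : ∀ ω, Y ω = Q ω + f (N ω))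
    (hQint : Integrable Q μ) (hfNint : Integrable (fun ω => f (N ω)) μ)
    -- `f(N)` is recoverable from `X`
    (hrecover : μ[(fun ω => f (N ω)) | MeasurableSpace.comap X inferInstance]
        =ᵐ[μ] fun ω => f (N ω)) :
    (fun ω => Y ω - (μ[Y | MeasurableSpace.comap X inferInstance]) ω)
      =ᵐ[μ] fun ω => Q ω - ∫ ω', Q ω' ∂μ := by
  have hXeq : X = fun ω => g (N ω) := funext hX
  have hXm : Measurable X := hXeq ▸ (hg.comp hN)
  have hindQX : IndepFun Q X μ := by
    rw [hXeq]
    exact hindep.comp measurable_id hg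
  have hQcond : μ[Q | MeasurableSpace.comap X inferInstance]
      =ᵐ[μ] fun _ => ∫ ω', Q ω' ∂μ := by
    exact condExp_indep_eq hQ.comap_le hXm.comap_le
      (Measurable.stronglyMeasurable (measurable_iff_comap_le.mpr le_rfl)) hindQX
  have hYeq : Y = Q + fun ω => f (N ω) := funext hY
  have hadd : μ[Y | MeasurableSpace.comap X inferInstance]
      =ᵐ[μ] μ[Q | MeasurableSpace.comap X inferInstance]
        + μ[(fun ω => f (N ω)) | MeasurableSpace.comap X inferInstance] := by
    rw [hYeq]
    exact condExp_add hQint hfNint _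
  filter_upwards [hadd, hQcond, hrecover] with ω h1 h2 h3
  simp only [hY ω, h1, Pi.add_apply, h2, h3]
  ring
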